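/- arXiv:1701.01435 — 2 statements merged into one kernel-verified Lean document; each statement's English description precedes it below -/
import Mathlib

section
/- Let f : \mathbb{R} \to \mathbb{R} be a twice continuously differentiable, 2L-periodic function with f(x) > 0 for all x, which is a stationary state of the aggregation-diffusion equation, i.e. the flux J(x) = D f'(x) + f(x) \cdot (d/dx)(V*f)(x) has zero derivative for all x. Then the function \xi(x) = D \log f(x) + (V*f)(x) is constant on \mathbb{R}. -/
open Real MeasureTheory

/-- The 1D interaction potential: `V x = (|x| - ℓ)^2 - (R - ℓ)^2` for `|x| < R`, `0` otherwise. -/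
noncomputable def potV (R ℓ : ℝ) (x : ℝ) : ℝ :=
  if |x| < R then (|x| - ℓ) ^ 2 - (R - ℓ) ^ 2 else 0

/-- Convolution of the potential `V` with a function `f`:
`(V * f)(x) = ∫ V(x - y) f(y) dy`. -/
noncomputable def Vconv (R ℓ : ℝ) (f : ℝ → ℝ) (x : ℝ) : ℝ :=
  ∫ y : ℝ, potV R ℓ (x - y) * f y

lemma potV_eq (R ℓ : ℝ) : potV R ℓ = fun x => (min |x| R - ℓ) ^ 2 - (R - ℓ) ^ 2 := by
  funext x
  unfold potV
  rcases lt_or_ge |x| R with h | h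
  · rw [if_pos h, min_eq_left h.le]
  · rw [if_neg (not_lt.mpr h), min_eq_right h]
    ring

lemma potV_cont (R ℓ : ℝ) : Continuous (potV R ℓ) := by
  rw [potV_eq]
  fun_prop

lemma potV_hcs (R ℓ : ℝ) : HasCompactSupport (potV R ℓ) := by
  apply HasCompactSupport.intro (isCompact_Icc (a := -R) (b := R))
  intro x hx
  simp only [Set.mem_Icc, not_and_or, not_le] at hx
  unfold potV
  rw [if_neg]
  rw [not_lt, le_abs]
  rcases hx with h | h
  · right; linarith
  · left; linarith

lemma potV_integrable (R ℓ : ℝ) : Integrable (potV R ℓ) :=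
  (potV_cont R ℓ).integrable_of_hasCompactSupport (potV_hcs R ℓ)

lemma potV_zero_of (R ℓ : ℝ) {t : ℝ} (h : R ≤ |t|) : potV R ℓ t = 0 := by
  unfold potV
  rw [if_neg (not_lt.mpr h)]

/-- Differentiation under the integral for convolution with `potV`. -/
lemma conv_hasDerivAt (R ℓ : ℝ) (g g' : ℝ → ℝ)
    (hg : ∀ x, HasDerivAt g (g' x) x) (hg'c : Continuous g') (x₀ : ℝ) :
    HasDerivAt (fun x => ∫ t, potV R ℓ t * g (x - t))
      (∫ t, potV R ℓ t * g' (x₀ - t)) x₀ := by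
  have hdg : Differentiable ℝ g := fun x => (hg x).differentiableAt
  have hgc : Continuous g := hdg.continuous
  set K : Set ℝ := Set.Icc (x₀ - 1 - |R|) (x₀ + 1 + |R|) with hK
  obtain ⟨C, hC⟩ := (isCompact_Icc (a := x₀ - 1 - |R|) (b := x₀ + 1 + |R|)).exists_bound_of_continuousOn
    hg'c.continuousOn
  have main := hasDerivAt_integral_of_dominated_loc_of_deriv_le (μ := volume)
    (F := fun x t => potV R ℓ t * g (x - t))
    (F' := fun x t => potV R ℓ t * g' (x - t))
    (bound := fun t => |potV R ℓ t| * C) (x₀ := x₀) (s := Metric.ball x₀ 1) (Metric.ball_mem_nhds x₀ one_pos)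
    ?_ ?_ ?_ ?_ ?_ ?_
  · exact main.2
  · refine Filter.Eventually.of_forall (fun x => ?_)
    exact ((potV_cont R ℓ).mul (hgc.comp (continuous_const.sub continuous_id))).aestronglyMeasurable
  · apply Continuous.integrable_of_hasCompactSupport
    · exact (potV_cont R ℓ).mul (hgc.comp (continuous_const.sub continuous_id))
    · exact (potV_hcs R ℓ).mul_right
  · exact ((potV_cont R ℓ).mul (hg'c.comp (continuous_const.sub continuous_id))).aestronglyMeasurable
  · refine Filter.Eventually.of_forall (fun t => fun x hx => ?_)
    show ‖potV R ℓ t * g' (x - t)‖ ≤ |potV R ℓ t| * C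
    rcases le_or_gt R |t| with ht | ht
    · rw [potV_zero_of R ℓ ht]
      simp
    · rw [Real.norm_eq_abs, abs_mul]
      apply mul_le_mul_of_nonneg_left _ (abs_nonneg _)
      rw [← Real.norm_eq_abs]
      apply hC
      rw [Metric.mem_ball, Real.dist_eq, abs_lt] at hx
      have ht' := abs_lt.mp (ht.trans_le (le_abs_self R))
      have h1 := le_abs_self R
      have h2 := neg_abs_le R
      constructor <;> linarith [hx.1, hx.2, ht'.1, ht'.2]
  · exact (Integrable.abs (potV_integrable R ℓ)).mul_const C
  · refine Filter.Eventually.of_forall (fun t => fun x _ => ?_)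
    have h1 : HasDerivAt (fun x => g (x - t)) (g' (x - t) * 1) x :=
      (hg (x - t)).comp x ((hasDerivAt_id x).sub_const t)
    simpa using h1.const_mul (potV R ℓ t)

theorem stationary_state_xi_constant (L R ℓ D : ℝ) (hL : 0 < L) (hR : 0 < R) (hRL : R ≤ L)
    (hℓ : 0 ≤ ℓ) (hD : 0 < D) (f : ℝ → ℝ)
    (hf : ContDiff ℝ 2 f)
    (hper : Function.Periodic f (2 * L))
    (hpos : ∀ x, 0 < f x)
    (hflux : ∀ x, deriv (fun x' => D * deriv f x' + f x' * deriv (Vconv R ℓ f) x') x = 0) :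
    ∀ x y : ℝ,
      D * Real.log (f x) + Vconv R ℓ f x = D * Real.log (f y) + Vconv R ℓ f y := by
  -- basic differentiability facts about f
  have hf2 : ContDiff ℝ (1 + 1) f := by norm_num; exact hf
  have hdf : Differentiable ℝ f := hf.differentiable (by norm_num)
  have hf1 : ∀ x, HasDerivAt f (deriv f x) x := fun x => (hdf x).hasDerivAt
  have hf1cd : ContDiff ℝ 1 (deriv f) := (contDiff_succ_iff_deriv.mp hf2).2.2
  have hf1c : Continuous (deriv f) := hf1cd.continuous
  have hdf1 : Differentiable ℝ (deriv f) := hf1cd.differentiable one_ne_zero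
  have hf2' : ∀ x, HasDerivAt (deriv f) (deriv (deriv f) x) x := fun x => (hdf1 x).hasDerivAt
  have hf2c : Continuous (deriv (deriv f)) := hf1cd.continuous_deriv le_rfl
  -- the convolution in "shifted" form
  set W0 : ℝ → ℝ := fun x => ∫ t, potV R ℓ t * f (x - t) with hW0def
  set W1 : ℝ → ℝ := fun x => ∫ t, potV R ℓ t * deriv f (x - t) with hW1def
  have hVW0 : Vconv R ℓ f = W0 := by
    funext x
    show (∫ y, potV R ℓ (x - y) * f y) = ∫ t, potV R ℓ t * f (x - t)
    rw [← integral_sub_left_eq_self (fun t => potV R ℓ t * f (x - t)) volume x]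
    congr 1
    funext y
    simp
  have hW0d : ∀ x, HasDerivAt W0 (W1 x) x := fun x =>
    conv_hasDerivAt R ℓ f (deriv f) hf1 hf1c x
  have hW1d : ∀ x, HasDerivAt W1 (∫ t, potV R ℓ t * deriv (deriv f) (x - t)) x := fun x =>
    conv_hasDerivAt R ℓ (deriv f) (deriv (deriv f)) hf2' hf2c x
  have hVd : ∀ x, HasDerivAt (Vconv R ℓ f) (W1 x) x := by
    rw [hVW0]; exact hW0d
  have hVderiv : deriv (Vconv R ℓ f) = W1 := funext fun x => (hVd x).deriv
  -- the flux J
  set J : ℝ → ℝ := fun x => D * deriv f x + f x * W1 x with hJdef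
  have hJderiv0 : ∀ x, deriv J x = 0 := by
    intro x
    have : J = fun x' => D * deriv f x' + f x' * deriv (Vconv R ℓ f) x' := by
      funext x'; rw [hVderiv]
    rw [this]
    exact hflux x
  have hJdiff : Differentiable ℝ J := by
    apply Differentiable.add
    · exact hdf1.const_mul D
    · exact hdf.mul (fun x => (hW1d x).differentiableAt)
  have hJconst : ∀ x, J x = J 0 := fun x => is_const_of_deriv_eq_zero hJdiff hJderiv0 x 0
  set c : ℝ := J 0 with hcdef
  -- the function ξ
  set ξ : ℝ → ℝ := fun x => D * Real.log (f x) + Vconv R ℓ f x with hξdef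
  have hξd : ∀ x, HasDerivAt ξ (c / f x) x := by
    intro x
    have hlog : HasDerivAt (fun x => Real.log (f x)) (deriv f x / f x) x :=
      (hf1 x).log (hpos x).ne'
    have h := (hlog.const_mul D).add (hVd x)
    have hne := (hpos x).ne'
    have : D * (deriv f x / f x) + W1 x = c / f x := by
      rw [← hJconst x, hJdef]
      field_simp
    rwa [this] at h
  have hξderiv : ∀ x, deriv ξ x = c / f x := fun x => (hξd x).deriv
  -- ξ is periodic
  have hξper : ξ (0 + 2 * L) = ξ 0 := by
    have hfp : f (0 + 2 * L) = f 0 := hper 0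
    have hVp : Vconv R ℓ f (0 + 2 * L) = Vconv R ℓ f 0 := by
      rw [hVW0]
      show (∫ t, potV R ℓ t * f (0 + 2 * L - t)) = ∫ t, potV R ℓ t * f (0 - t)
      congr 1
      funext t
      rw [show 0 + 2 * L - t = (0 - t) + 2 * L by ring, hper]
    show D * Real.log (f (0 + 2 * L)) + Vconv R ℓ f (0 + 2 * L) =
      D * Real.log (f 0) + Vconv R ℓ f 0
    rw [hfp, hVp]
  have h2L : (0 : ℝ) < 0 + 2 * L := by linarith
  -- c = 0
  have hc : c = 0 := by
    rcases lt_trichotomy c 0 with h | h | h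
    · exfalso
      have : StrictAnti ξ := strictAnti_of_deriv_neg (fun x => by
        rw [hξderiv x]; exact div_neg_of_neg_of_pos h (hpos x))
      exact absurd hξper (this h2L).ne
    · exact h
    · exfalso
      have : StrictMono ξ := strictMono_of_deriv_pos (fun x => by
        rw [hξderiv x]; exact div_pos h (hpos x))
      exact absurd hξper (this h2L).ne'
  -- conclude
  have hconst : ∀ x y, ξ x = ξ y := by
    apply is_const_of_deriv_eq_zero
    · exact fun x => (hξd x).differentiableAt
    · intro x; rw [hξderiv x, hc, zero_div]
  exact hconst
end

section
/- Let L = 3, R = 3/4, and \ell \ge 0. Then 2\hat V_2 - \hat V_1 > 0 if and only if \ell > \ell^*, where \ell^* = (3/4) \cdot ((\pi - 4)\sqrt{2} + 2)/(\pi(\sqrt{2}-1)); consequently the bifurcation of the constant steady state is supercritical exactly for \ell \in (\ell^*, \ell_c) and subcritical for \ell \in (0, \ell^*), independently of the value of D. -/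
open Real MeasureTheory

/-- The `k`-th Fourier coefficient of `V` on the periodic domain `[-L, L]`.
It is a real number since `V` is real and even. -/
noncomputable def VhatC (L R ℓ : ℝ) (k : ℤ) : ℂ :=
  (1 / (2 * L)) *
    ∫ x in (-L)..L, (potV R ℓ x : ℂ) *
      Complex.exp (-(Complex.I * (π : ℂ) * (k : ℂ) * (x : ℂ) / (L : ℂ)))

lemma potV_continuous (R ℓ : ℝ) (hR : 0 < R) : Continuous (potV R ℓ) := by
  unfold potV
  apply Continuous.if
  · intro a ha
    have hset : {x : ℝ | |x| < R} = Set.Ioo (-R) R := by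
      ext x; simp [abs_lt]
    rw [hset, frontier_Ioo (by linarith)] at ha
    have ha' : a = -R ∨ a = R := by simpa using ha
    have : |a| = R := by
      rcases ha' with h | h
      · subst h; rw [abs_of_nonpos (by linarith)]; ring
      · subst h; exact abs_of_nonneg hR.le
    rw [this]; ring
  · fun_prop
  · fun_prop

lemma VhatC_re (ℓ : ℝ) (k : ℤ) :
    (VhatC 3 (3/4) ℓ k).re
      = (1/6) * ∫ x in (-3:ℝ)..3, potV (3/4) ℓ x * Real.cos (π * k * x / 3) := by
  unfold VhatC
  have hcont : Continuous fun x : ℝ => (potV (3/4) ℓ x : ℂ) *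
      Complex.exp (-(Complex.I * (π : ℂ) * (k : ℂ) * (x : ℂ) / ((3:ℝ) : ℂ))) := by
    have := potV_continuous (3/4) ℓ (by norm_num)
    fun_prop
  have hint := hcont.intervalIntegrable (μ := volume) (-(3:ℝ)) 3
  have key := Complex.reCLM.intervalIntegral_comp_comm hint
  simp only [Complex.reCLM_apply] at key
  have h1 : ((1 / (2 * ((3:ℝ):ℂ))) * ∫ x in (-(3:ℝ))..3, (potV (3/4) ℓ x : ℂ) *
      Complex.exp (-(Complex.I * (π : ℂ) * (k : ℂ) * (x : ℂ) / ((3:ℝ):ℂ)))).re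
      = (1/6) * (∫ x in (-(3:ℝ))..3, (potV (3/4) ℓ x : ℂ) *
      Complex.exp (-(Complex.I * (π : ℂ) * (k : ℂ) * (x : ℂ) / ((3:ℝ):ℂ)))).re := by
    rw [show (1 / (2 * ((3:ℝ):ℂ))) = (((1:ℝ)/6 : ℝ) : ℂ) by push_cast; ring]
    rw [Complex.re_ofReal_mul]
  rw [h1, ← key]
  congr 1
  apply intervalIntegral.integral_congr
  intro x _
  simp only [Complex.reCLM_apply]
  have harg : -(Complex.I * (π : ℂ) * (k : ℂ) * (x : ℂ) / ((3:ℝ):ℂ))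
      = ((-(π * k * x / 3) : ℝ) : ℂ) * Complex.I := by
    push_cast; ring
  rw [harg, Complex.re_ofReal_mul, Complex.exp_ofReal_mul_I_re, Real.cos_neg]

lemma antider (ω a c : ℝ) (hω : ω ≠ 0) (x : ℝ) :
    HasDerivAt (fun x : ℝ => ((x - a) ^ 2 - c - 2 / ω ^ 2) * Real.sin (ω * x) / ω
        + 2 * (x - a) * Real.cos (ω * x) / ω ^ 2)
      (((x - a) ^ 2 - c) * Real.cos (ω * x)) x := by
  have hs : HasDerivAt (fun x : ℝ => Real.sin (ω * x)) (Real.cos (ω * x) * ω) x := by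
    simpa [Function.comp_def] using (Real.hasDerivAt_sin (ω * x)).comp x ((hasDerivAt_id x).const_mul ω)
  have hc : HasDerivAt (fun x : ℝ => Real.cos (ω * x)) (-Real.sin (ω * x) * ω) x := by
    simpa [Function.comp_def] using (Real.hasDerivAt_cos (ω * x)).comp x ((hasDerivAt_id x).const_mul ω)
  have hp : HasDerivAt (fun x : ℝ => (x - a) ^ 2 - c - 2 / ω ^ 2) (2 * (x - a)) x := by
    have h1 : HasDerivAt (fun x : ℝ => (x - a) ^ 2) (2 * (x - a)) x := by
      simpa [Pi.pow_def] using ((hasDerivAt_id x).sub_const a).pow 2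
    simpa using (h1.sub_const c).sub_const (2 / ω ^ 2)
  have hq : HasDerivAt (fun x : ℝ => 2 * (x - a)) 2 x := by
    simpa using ((hasDerivAt_id x).sub_const a).const_mul 2
  have := ((hp.mul hs).div_const ω).add ((hq.mul hc).div_const (ω ^ 2))
  refine this.congr_deriv ?_
  field_simp
  ring

lemma integral_pot_cos (ℓ ω : ℝ) (hω : ω ≠ 0) :
    ∫ x in (-3:ℝ)..3, potV (3/4) ℓ x * Real.cos (ω * x)
      = -4 * Real.sin (3 * ω / 4) / ω ^ 3 + 4 * (3/4 - ℓ) * Real.cos (3 * ω / 4) / ω ^ 2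
        + 4 * ℓ / ω ^ 2 := by
  have hcont : Continuous fun x : ℝ => potV (3/4) ℓ x * Real.cos (ω * x) := by
    have := potV_continuous (3/4) ℓ (by norm_num); fun_prop
  have hi : ∀ a b : ℝ, IntervalIntegrable (fun x : ℝ => potV (3/4) ℓ x * Real.cos (ω * x))
      volume a b := fun a b => hcont.intervalIntegrable a b
  rw [← intervalIntegral.integral_add_adjacent_intervals (hi (-3) 0) (hi 0 3),
      ← intervalIntegral.integral_add_adjacent_intervals (hi (-3) (-3/4)) (hi (-3/4) 0),
      ← intervalIntegral.integral_add_adjacent_intervals (hi 0 (3/4)) (hi (3/4) 3)]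
  have h1 : (∫ x in (-3:ℝ)..(-3/4), potV (3/4) ℓ x * Real.cos (ω * x)) = 0 := by
    rw [intervalIntegral.integral_congr (g := fun _ => (0:ℝ))]
    · simp
    · intro x hx
      rw [Set.uIcc_of_le (by norm_num)] at hx
      have : ¬ |x| < 3/4 := by
        rw [abs_lt]; push_neg; intro h; linarith [hx.1, hx.2]
      simp [potV, this]
  have h4 : (∫ x in (3/4:ℝ)..3, potV (3/4) ℓ x * Real.cos (ω * x)) = 0 := by
    rw [intervalIntegral.integral_congr (g := fun _ => (0:ℝ))]
    · simp
    · intro x hx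
      rw [Set.uIcc_of_le (by norm_num)] at hx
      have : ¬ |x| < 3/4 := by
        rw [abs_lt]; push_neg; intro h; linarith [hx.1, hx.2]
      simp [potV, this]
  have h3 : (∫ x in (0:ℝ)..(3/4), potV (3/4) ℓ x * Real.cos (ω * x))
      = ∫ x in (0:ℝ)..(3/4), ((x - ℓ) ^ 2 - (3/4 - ℓ) ^ 2) * Real.cos (ω * x) := by
    apply intervalIntegral.integral_congr
    intro x hx
    rw [Set.uIcc_of_le (by norm_num)] at hx
    simp only [potV]
    split_ifs with h
    · rw [abs_of_nonneg hx.1]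
    · have h' : (3:ℝ)/4 ≤ |x| := not_lt.mp h
      rw [abs_of_nonneg hx.1] at h'
      have hx34 : x = 3/4 := le_antisymm hx.2 h'
      subst hx34; ring
  have h2 : (∫ x in (-3/4:ℝ)..0, potV (3/4) ℓ x * Real.cos (ω * x))
      = ∫ x in (-3/4:ℝ)..0, ((x - (-ℓ)) ^ 2 - (3/4 - ℓ) ^ 2) * Real.cos (ω * x) := by
    apply intervalIntegral.integral_congr
    intro x hx
    rw [Set.uIcc_of_le (by norm_num)] at hx
    simp only [potV]
    split_ifs with h
    · rw [abs_of_nonpos hx.2]; ring_nf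
    · have h' : (3:ℝ)/4 ≤ |x| := not_lt.mp h
      rw [abs_of_nonpos hx.2] at h'
      have hx34 : x = -(3/4) := by linarith [hx.1]
      subst hx34; ring_nf
  rw [h1, h2, h3, h4]
  rw [intervalIntegral.integral_eq_sub_of_hasDerivAt
        (fun x _ => antider ω ℓ ((3/4 - ℓ) ^ 2) hω x)
        (Continuous.intervalIntegrable (by fun_prop) _ _),
      intervalIntegral.integral_eq_sub_of_hasDerivAt
        (fun x _ => antider ω (-ℓ) ((3/4 - ℓ) ^ 2) hω x)
        (Continuous.intervalIntegrable (by fun_prop) _ _)]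
  rw [show ω * (3/4 : ℝ) = 3 * ω / 4 by ring, show ω * (-3/4 : ℝ) = -(3 * ω / 4) by ring,
      show ω * (0:ℝ) = 0 by ring]
  simp only [Real.sin_neg, Real.cos_neg, Real.sin_zero, Real.cos_zero, mul_zero, mul_one,
    zero_div, add_zero, zero_add, sub_zero]
  field_simp
  ring

lemma Vhat_val (ℓ : ℝ) (k : ℤ) (ω : ℝ) (hω : ω ≠ 0) (hk : π * k / 3 = ω) :
    (VhatC 3 (3/4) ℓ k).re
      = (1/6) * (-4 * Real.sin (3 * ω / 4) / ω ^ 3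
          + 4 * (3/4 - ℓ) * Real.cos (3 * ω / 4) / ω ^ 2 + 4 * ℓ / ω ^ 2) := by
  rw [VhatC_re]
  congr 1
  rw [← integral_pot_cos ℓ ω hω]
  apply intervalIntegral.integral_congr
  intro x _
  have : π * (k:ℝ) * x / 3 = ω * x := by rw [← hk]; ring
  simp only [this]

lemma key_eq (ℓ : ℝ) :
    2 * (VhatC 3 (3 / 4) ℓ 2).re - (VhatC 3 (3 / 4) ℓ 1).re
      = (54 * Real.sqrt 2 - 27 + π * (18 * (Real.sqrt 2 - 1) * ℓ - 27 * Real.sqrt 2 / 2))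
          / (6 * π ^ 3) := by
  have hπ := Real.pi_pos
  have h2 := Vhat_val ℓ 2 (2 * π / 3) (by positivity) (by push_cast; ring)
  have h1 := Vhat_val ℓ 1 (π / 3) (by positivity) (by push_cast; ring)
  rw [h1, h2, show 3 * (2 * π / 3) / 4 = π / 2 by ring, show 3 * (π / 3) / 4 = π / 4 by ring,
    Real.sin_pi_div_two, Real.cos_pi_div_two, Real.sin_pi_div_four, Real.cos_pi_div_four]
  field_simp
  ring

/-- For `L = 3`, `R = 3/4`: `2V̂₂ - V̂₁ > 0` iff `ℓ > ℓ* = (3/4)((π - 4)√2 + 2)/(π(√2 - 1))`.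
Consequently (by the bifurcation criterion of Proposition 1), the bifurcation of the constant
steady state is supercritical (`2V̂₂ - V̂₁ > 0`) exactly for `ℓ ∈ (ℓ*, ℓ_c)` and subcritical
(`2V̂₂ - V̂₁ < 0`) for `ℓ ∈ (0, ℓ*)`, independently of `D`,
where `ℓ_c = (3/4)(4 - π)(√2 + 1)/π`. -/
theorem bifurcation_type_threshold_1D (ℓ : ℝ) (hℓ : 0 ≤ ℓ) :
    (2 * (VhatC 3 (3 / 4) ℓ 2).re - (VhatC 3 (3 / 4) ℓ 1).re > 0 ↔
        ℓ > (3 / 4) * ((π - 4) * Real.sqrt 2 + 2) / (π * (Real.sqrt 2 - 1))) ∧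
      ((3 / 4) * ((π - 4) * Real.sqrt 2 + 2) / (π * (Real.sqrt 2 - 1)) < ℓ ∧
          ℓ < (3 / 4) * (4 - π) * (Real.sqrt 2 + 1) / π →
        2 * (VhatC 3 (3 / 4) ℓ 2).re - (VhatC 3 (3 / 4) ℓ 1).re > 0) ∧
      (0 < ℓ ∧ ℓ < (3 / 4) * ((π - 4) * Real.sqrt 2 + 2) / (π * (Real.sqrt 2 - 1)) →
        2 * (VhatC 3 (3 / 4) ℓ 2).re - (VhatC 3 (3 / 4) ℓ 1).re < 0) := by
  have hπ := Real.pi_pos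
  set s := Real.sqrt 2 with hs
  have hs2 : s ^ 2 = 2 := Real.sq_sqrt (by norm_num)
  have hs1 : 1 < s := by nlinarith [Real.sqrt_nonneg 2]
  have hden : 0 < π * (s - 1) := by nlinarith
  have h6 : (0:ℝ) < 6 * π ^ 3 := by positivity
  have hiff : 2 * (VhatC 3 (3 / 4) ℓ 2).re - (VhatC 3 (3 / 4) ℓ 1).re > 0 ↔
      ℓ > (3 / 4) * ((π - 4) * s + 2) / (π * (s - 1)) := by
    rw [key_eq, gt_iff_lt, lt_div_iff₀ h6, zero_mul, gt_iff_lt, div_lt_iff₀ hden]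
    constructor <;> intro h <;> nlinarith
  refine ⟨hiff, fun h => hiff.mpr h.1, fun h => ?_⟩
  have hlt : ℓ < (3 / 4) * ((π - 4) * s + 2) / (π * (s - 1)) := h.2
  rw [lt_div_iff₀ hden] at hlt
  rw [key_eq]
  apply div_neg_of_neg_of_pos _ h6
  nlinarith
end
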